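/- Let S = (Q, R, ℓ) be a finite Kripke structure and define S₂ = (Q ∪ Q_int, R₂, ℓ₂), where each state of S with k ≥ 2 successors q₁,…,q_k has its outgoing transitions replaced by a transition to the root of a complete binary tree of k−1 fresh internal nodes (all labelled with the fresh proposition p_int) whose k leaves are q₁,…,q_k, and states with a single successor keep their transition. Then every node of S₂ has degree at most 2, |Q_int| = Σ_{x ∈ Q, deg(x) ≥ 2} (deg(x) − 1), and for every state q ∈ Q the set of original states visited (in order, skipping p_int-states) along paths of S₂ from q coincides with the set of paths of S from q. -/

import Mathlib

/-- The path `ρ` (in `S`) is obtained from the path `π` (in `S₂`, over `Q ⊕ Qint`,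
where `Qint` are the `p_int`-labelled internal nodes) by erasing the internal nodes:
some strictly monotone `σ` enumerates exactly the positions of `π` carrying original
states, in order, and `ρ` lists the corresponding original states. -/
def Erases {Q Qint : Type} (π : ℕ → Q ⊕ Qint) (ρ : ℕ → Q) : Prop :=
  ∃ σ : ℕ → ℕ, StrictMono σ ∧ (∀ n, π (σ n) = Sum.inl (ρ n)) ∧
    ∀ m x, π m = Sum.inl x → ∃ n, σ n = m

set_option linter.unusedSectionVars false
set_option linter.unusedVariables false

open Classical
section BinEnc
variable {Q : Type} [Fintype Q] [DecidableEq Q] (R : Q → Q → Prop)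

noncomputable def bdeg (x : Q) : ℕ := Set.ncard {y | R x y}
noncomputable def beqv (x : Q) : {y | R x y} ≃ Fin (bdeg R x) :=
  Finite.equivFinOfCardEq (by rw [Nat.card_coe_set_eq]; rfl)
noncomputable def benum (x : Q) (n : ℕ) : Q :=
  if h : n < bdeg R x then ((beqv R x).symm ⟨n, h⟩ : {y | R x y}).1 else x
theorem benum_mem {x : Q} {n : ℕ} (h : n < bdeg R x) : R x (benum R x n) := by
  unfold benum; rw [dif_pos h]; exact ((beqv R x).symm ⟨n, h⟩).2
theorem benum_inj {x : Q} {m n : ℕ} (hm : m < bdeg R x) (hn : n < bdeg R x)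
    (h : benum R x m = benum R x n) : m = n := by
  unfold benum at h; rw [dif_pos hm, dif_pos hn] at h
  have := (beqv R x).symm.injective (Subtype.ext h)
  simpa [Fin.ext_iff] using this

theorem benum_surj {x y : Q} (h : R x y) : ∃ n, n < bdeg R x ∧ benum R x n = y := by
  refine ⟨(beqv R x ⟨y, h⟩).1, (beqv R x ⟨y, h⟩).2, ?_⟩
  unfold benum; rw [dif_pos (beqv R x ⟨y, h⟩).2]
  simp

def BQint : Type _ := Σ x : Q, Fin (bdeg R x - 1)
noncomputable instance : Fintype (BQint R) := by unfold BQint; infer_instance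
noncomputable def bR2 : Q ⊕ BQint R → Q ⊕ BQint R → Prop
  | Sum.inl x, b => (bdeg R x ≤ 1 ∧ b = Sum.inl (benum R x 0)) ∨
      (∃ h : 0 < bdeg R x - 1, b = Sum.inr ⟨x, ⟨0, h⟩⟩)
  | Sum.inr ⟨x, i⟩, b => b = Sum.inl (benum R x i.1) ∨
      (if h : i.1 + 2 < bdeg R x then b = Sum.inr ⟨x, ⟨i.1 + 1, by omega⟩⟩
       else b = Sum.inl (benum R x (i.1 + 1)))

theorem bR2_inr_inr {x : Q} {i : Fin (bdeg R x - 1)} {p : BQint R}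
    (h : bR2 R (Sum.inr ⟨x, i⟩) (Sum.inr p)) :
    ∃ _ : i.1 + 2 < bdeg R x, p = ⟨x, ⟨i.1 + 1, by omega⟩⟩ := by
  rcases h with h | h
  · exact absurd h (by simp)
  · by_cases hlt : i.1 + 2 < bdeg R x
    · rw [dif_pos hlt] at h; exact ⟨hlt, Sum.inr.inj h⟩
    · rw [dif_neg hlt] at h; exact absurd h (by simp)

theorem bR2_inr_inl {x : Q} {i : Fin (bdeg R x - 1)} {y : Q}
    (h : bR2 R (Sum.inr ⟨x, i⟩) (Sum.inl y)) :
    ∃ j, i.1 ≤ j ∧ j < bdeg R x ∧ y = benum R x j := by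
  have hi := i.2
  rcases h with h | h
  · exact ⟨i.1, le_refl _, by omega, Sum.inl.inj h⟩
  · by_cases hlt : i.1 + 2 < bdeg R x
    · rw [dif_pos hlt] at h; exact absurd h (by simp)
    · rw [dif_neg hlt] at h
      exact ⟨i.1 + 1, by omega, by omega, Sum.inl.inj h⟩

theorem bchain {π : ℕ → Q ⊕ BQint R} (hπ : ∀ k, bR2 R (π k) (π (k+1))) :
    ∀ t m x (i : Fin (bdeg R x - 1)) y, π m = Sum.inr ⟨x, i⟩ →
      (∀ s, s < t → ¬(π (m+1+s)).isLeft) → π (m+1+t) = Sum.inl y →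
      ∃ j, i.1 ≤ j ∧ j < bdeg R x ∧ y = benum R x j := by
  intro t
  induction t with
  | zero =>
    intro m x i y hm _ hy
    have h := hπ m; rw [hm, hy] at h
    exact bR2_inr_inl R h
  | succ t ih =>
    intro m x i y hm hgap hy
    have h0 : ¬(π (m+1)).isLeft := by
      have := hgap 0 (by omega); simpa using this
    cases hp : π (m+1) with
    | inl z => rw [hp] at h0; simp at h0
    | inr p =>
      have hst := hπ m; rw [hm, hp] at hst
      obtain ⟨hlt, rfl⟩ := bR2_inr_inr R hst
      have hgap' : ∀ s, s < t → ¬(π (m+1+1+s)).isLeft := by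
        intro s hs
        rw [show m+1+1+s = m+1+(s+1) from by omega]
        exact hgap (s+1) (by omega)
      have hy' : π (m+1+1+t) = Sum.inl y := by
        rw [show m+1+1+t = m+1+(t+1) from by omega]; exact hy
      obtain ⟨j, hj1, hj2, hj3⟩ := ih (m+1) x ⟨i.1+1, by omega⟩ y hp hgap' hy'
      exact ⟨j, le_trans (Nat.le_succ i.1) hj1, hj2, hj3⟩

theorem bnextLeft_aux {π : ℕ → Q ⊕ BQint R} (hπ : ∀ k, bR2 R (π k) (π (k+1))) :
    ∀ c m x (i : Fin (bdeg R x - 1)), π m = Sum.inr ⟨x, i⟩ →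
      bdeg R x - i.1 ≤ c → ∃ t, (π (m+1+t)).isLeft := by
  intro c
  induction c with
  | zero => intro m x i hm hc; have := i.2; omega
  | succ c ih =>
    intro m x i hm hc
    cases hp : π (m+1) with
    | inl z => exact ⟨0, by rw [show m+1+0 = m+1 from rfl, hp]; rfl⟩
    | inr p =>
      have hst := hπ m; rw [hm, hp] at hst
      obtain ⟨hlt, rfl⟩ := bR2_inr_inr R hst
      obtain ⟨t, ht⟩ := ih (m+1) x ⟨i.1+1, by omega⟩ hp
        (by show bdeg R x - (i.1+1) ≤ c; omega)
      exact ⟨1+t, by rw [show m+1+(1+t) = m+1+1+t from by omega]; exact ht⟩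

theorem bnextLeft {π : ℕ → Q ⊕ BQint R} (hπ : ∀ k, bR2 R (π k) (π (k+1)))
    (m : ℕ) : ∃ t, (π (m+1+t)).isLeft := by
  cases hp : π m with
  | inl x =>
    have hst := hπ m; rw [hp] at hst
    rcases hst with ⟨-, h⟩ | ⟨h, hb⟩
    · exact ⟨0, by rw [show m+1+0 = m+1 from rfl, h]; rfl⟩
    · obtain ⟨t, ht⟩ := bnextLeft_aux R hπ (bdeg R x) (m+1) x ⟨0, h⟩ hb (by omega)
      exact ⟨1+t, by rw [show m+1+(1+t) = m+1+1+t from by omega]; exact ht⟩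
  | inr p =>
    obtain ⟨x, i⟩ := p
    exact bnextLeft_aux R hπ (bdeg R x) m x i hp (Nat.sub_le _ _)

noncomputable def bsig {π : ℕ → Q ⊕ BQint R}
    (hπ : ∀ k, bR2 R (π k) (π (k+1))) : ℕ → ℕ
  | 0 => 0
  | n + 1 => bsig hπ n + 1 + Nat.find (bnextLeft R hπ (bsig hπ n))

theorem bsig_mono {π : ℕ → Q ⊕ BQint R} (hπ : ∀ k, bR2 R (π k) (π (k+1))) :
    StrictMono (bsig R hπ) :=
  strictMono_nat_of_lt_succ (fun n => by simp [bsig]; omega)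

theorem bsig_left {π : ℕ → Q ⊕ BQint R} {q : Q} (hq : π 0 = Sum.inl q)
    (hπ : ∀ k, bR2 R (π k) (π (k+1))) (n : ℕ) : (π (bsig R hπ n)).isLeft := by
  cases n with
  | zero => show (π 0).isLeft; rw [hq]; rfl
  | succ n => exact Nat.find_spec (bnextLeft R hπ (bsig R hπ n))

theorem bsig_gap {π : ℕ → Q ⊕ BQint R} (hπ : ∀ k, bR2 R (π k) (π (k+1)))
    {n m : ℕ} (h1 : bsig R hπ n < m) (h2 : m < bsig R hπ (n+1)) :
    ¬(π m).isLeft := by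
  have hm : m = bsig R hπ n + 1 + (m - bsig R hπ n - 1) := by omega
  have hlt : m - bsig R hπ n - 1 < Nat.find (bnextLeft R hπ (bsig R hπ n)) := by
    have : bsig R hπ (n+1) = bsig R hπ n + 1 + Nat.find (bnextLeft R hπ (bsig R hπ n)) := rfl
    omega
  rw [hm]
  exact Nat.find_min (bnextLeft R hπ (bsig R hπ n)) hlt

theorem bsig_bracket {π : ℕ → Q ⊕ BQint R} (hπ : ∀ k, bR2 R (π k) (π (k+1)))
    (m : ℕ) : ∃ n, bsig R hπ n ≤ m ∧ m < bsig R hπ (n+1) := by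
  induction m with
  | zero => exact ⟨0, le_refl _, bsig_mono R hπ (Nat.lt_succ_self 0)⟩
  | succ m ih =>
    obtain ⟨n, h1, h2⟩ := ih
    by_cases h : m + 1 < bsig R hπ (n+1)
    · exact ⟨n, by omega, h⟩
    · exact ⟨n+1, by omega, by have := bsig_mono R hπ (show n+1 < n+1+1 by omega); omega⟩

theorem bsig_surj {π : ℕ → Q ⊕ BQint R} (hπ : ∀ k, bR2 R (π k) (π (k+1)))
    {m : ℕ} (h : (π m).isLeft) : ∃ n, bsig R hπ n = m := by
  obtain ⟨n, h1, h2⟩ := bsig_bracket R hπ m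
  rcases eq_or_lt_of_le h1 with heq | hlt
  · exact ⟨n, heq⟩
  · exact absurd h (bsig_gap R hπ hlt h2)

noncomputable def brho {π : ℕ → Q ⊕ BQint R} (q : Q)
    (hπ : ∀ k, bR2 R (π k) (π (k+1))) (n : ℕ) : Q :=
  Sum.elim id (fun _ => q) (π (bsig R hπ n))

theorem brho_spec {π : ℕ → Q ⊕ BQint R} {q : Q} (hq : π 0 = Sum.inl q)
    (hπ : ∀ k, bR2 R (π k) (π (k+1))) (n : ℕ) :
    π (bsig R hπ n) = Sum.inl (brho R q hπ n) := by
  have := bsig_left R hq hπ n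
  rcases Sum.isLeft_iff.mp this with ⟨y, hy⟩
  rw [brho, hy]; rfl

theorem bdeg_pos' (htotal : ∀ u, ∃ u', R u u') (x : Q) : 0 < bdeg R x := by
  obtain ⟨y, hy⟩ := htotal x
  exact Set.ncard_pos (Set.toFinite _) |>.mpr ⟨y, hy⟩

theorem brho_path (htotal : ∀ u, ∃ u', R u u') {π : ℕ → Q ⊕ BQint R} {q : Q}
    (hq : π 0 = Sum.inl q) (hπ : ∀ k, bR2 R (π k) (π (k+1))) (n : ℕ) :
    R (brho R q hπ n) (brho R q hπ (n+1)) := by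
  set a := bsig R hπ n with ha
  have hb : bsig R hπ (n+1) = a + 1 + Nat.find (bnextLeft R hπ a) := rfl
  have hxa : π a = Sum.inl (brho R q hπ n) := brho_spec R hq hπ n
  have hxb : π (bsig R hπ (n+1)) = Sum.inl (brho R q hπ (n+1)) := brho_spec R hq hπ (n+1)
  cases ht : Nat.find (bnextLeft R hπ a) with
  | zero =>
    have hxb' : π (a+1) = Sum.inl (brho R q hπ (n+1)) := by
      rw [← hxb, hb, ht]
    have hst := hπ a; rw [hxa, hxb'] at hst
    rcases hst with ⟨-, h⟩ | ⟨h1, h2⟩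
    · rw [Sum.inl.inj h]
      exact benum_mem R (bdeg_pos' R htotal _)
    · exact absurd h2 (by simp)
  | succ s =>
    have h0 : ¬(π (a+1)).isLeft := by
      have := Nat.find_min (bnextLeft R hπ a) (m := 0) (by omega)
      simpa using this
    cases hp : π (a+1) with
    | inl z => rw [hp] at h0; simp at h0
    | inr p =>
      have hst := hπ a; rw [hxa, hp] at hst
      rcases hst with ⟨-, h⟩ | ⟨h, hb'⟩
      · exact absurd h (by simp)
      · rw [hb'] at hp
        have hgap : ∀ u, u < s → ¬(π (a+1+1+u)).isLeft := by
          intro u hu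
          rw [show a+1+1+u = a+1+(u+1) from by omega]
          exact Nat.find_min (bnextLeft R hπ a) (m := u+1) (by omega)
        have hy : π (a+1+1+s) = Sum.inl (brho R q hπ (n+1)) := by
          rw [show a+1+1+s = a+1+(s+1) from by omega, ← ht, ← hb]
          exact hxb
        obtain ⟨j, -, hj2, hj3⟩ := bchain R hπ s (a+1) _ ⟨0, h⟩ _ hp hgap hy
        rw [hj3]
        exact benum_mem R hj2


theorem bR2_inl_unique {x : Q} {b b' : Q ⊕ BQint R}
    (h : bR2 R (Sum.inl x) b) (h' : bR2 R (Sum.inl x) b') : b = b' := by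
  rcases h with ⟨hd, rfl⟩ | ⟨hd, rfl⟩ <;> rcases h' with ⟨hd', h2⟩ | ⟨hd', h2⟩
  · rw [h2]
  · exact absurd hd' (by omega)
  · exact absurd hd' (by omega)
  · rw [h2]

theorem bclash {π π' : ℕ → Q ⊕ BQint R} {q : Q}
    (hq : π 0 = Sum.inl q) (hq' : π' 0 = Sum.inl q)
    (hπ : ∀ k, bR2 R (π k) (π (k+1))) (hπ' : ∀ k, bR2 R (π' k) (π' (k+1)))
    {n m : ℕ} {x : Q} {i : Fin (bdeg R x - 1)}
    (hy : brho R q hπ (n+1) = brho R q hπ' (n+1))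
    (hm : π m = Sum.inr ⟨x, i⟩) (hm' : π' m = Sum.inr ⟨x, i⟩)
    (hb : bsig R hπ (n+1) = m + 1)
    (ha' : bsig R hπ' n < m + 1)
    (hb' : m + 1 < bsig R hπ' (n+1)) : False := by
  have hL : π (m+1) = Sum.inl (brho R q hπ (n+1)) := by
    rw [← hb]; exact brho_spec R hq hπ (n+1)
  have hnl : ¬(π' (m+1)).isLeft := bsig_gap R hπ' ha' hb'
  cases hp2 : π' (m+1) with
  | inl z => rw [hp2] at hnl; simp at hnl
  | inr p =>
    have e2 := hπ' m; rw [hm', hp2] at e2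
    obtain ⟨hlt, rfl⟩ := bR2_inr_inr R e2
    have e1 := hπ m; rw [hm, hL] at e1
    have hA : brho R q hπ (n+1) = benum R x i.1 := by
      rcases e1 with h | h
      · exact Sum.inl.inj h
      · rw [dif_pos hlt] at h; exact absurd h (by simp)
    have hgap : ∀ s, s < bsig R hπ' (n+1) - (m+2) → ¬(π' (m+1+1+s)).isLeft := by
      intro s hs
      exact bsig_gap R hπ' (n := n) (by omega) (by omega)
    have hend : π' (m+1+1+(bsig R hπ' (n+1) - (m+2))) = Sum.inl (brho R q hπ (n+1)) := by
      rw [show m+1+1+(bsig R hπ' (n+1) - (m+2)) = bsig R hπ' (n+1) from by omega, hy]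
      exact brho_spec R hq' hπ' (n+1)
    obtain ⟨k, hk1, hk2, hk3⟩ := bchain R hπ' (bsig R hπ' (n+1) - (m+2)) (m+1) x
      ⟨i.1+1, by omega⟩ _ hp2 hgap hend
    have hk1' : i.1 + 1 ≤ k := hk1
    have : i.1 = k := benum_inj R (by have := i.2; omega) hk2 (hA.symm.trans hk3)
    omega

theorem binj {π π' : ℕ → Q ⊕ BQint R} {q : Q}
    (hq : π 0 = Sum.inl q) (hq' : π' 0 = Sum.inl q)
    (hπ : ∀ k, bR2 R (π k) (π (k+1))) (hπ' : ∀ k, bR2 R (π' k) (π' (k+1)))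
    (hρ : ∀ k, brho R q hπ k = brho R q hπ' k) : π = π' := by
  have main : ∀ n, bsig R hπ n = bsig R hπ' n ∧
      ∀ m, m ≤ bsig R hπ n → π m = π' m := by
    intro n
    induction n with
    | zero =>
      refine ⟨rfl, fun m hm => ?_⟩
      have : m = 0 := Nat.le_zero.mp hm
      subst this; rw [hq, hq']
    | succ n ih =>
      obtain ⟨hs, heqm⟩ := ih
      have inner : ∀ j, bsig R hπ n + j ≤ bsig R hπ (n+1) →
          bsig R hπ n + j ≤ bsig R hπ' (n+1) →
          π (bsig R hπ n + j) = π' (bsig R hπ n + j) := by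
        intro j
        induction j with
        | zero => intro _ _; exact heqm _ (by omega)
        | succ j ihj =>
          intro hjb hjb'
          have heq : π (bsig R hπ n + j) = π' (bsig R hπ n + j) :=
            ihj (by omega) (by omega)
          by_cases hj0 : j = 0
          · subst hj0
            have hxa : π (bsig R hπ n) = Sum.inl (brho R q hπ n) := brho_spec R hq hπ n
            have hxa' : π' (bsig R hπ n) = Sum.inl (brho R q hπ n) := by
              have h2 := brho_spec R hq' hπ' n
              rw [← hs, ← hρ n] at h2
              exact h2
            have h1 := hπ (bsig R hπ n); have h2 := hπ' (bsig R hπ n)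
            rw [hxa] at h1; rw [hxa'] at h2
            have := bR2_inl_unique R h1 h2
            rw [show bsig R hπ n + (0+1) = bsig R hπ n + 1 from by omega]
            exact this
          · have hnl : ¬(π (bsig R hπ n + j)).isLeft :=
              bsig_gap R hπ (n := n) (by omega) (by omega)
            cases hp : π (bsig R hπ n + j) with
            | inl z => rw [hp] at hnl; simp at hnl
            | inr p =>
              obtain ⟨x, i⟩ := p
              have hp' : π' (bsig R hπ n + j) = Sum.inr ⟨x, i⟩ := by rw [← heq, hp]
              rw [show bsig R hπ n + (j+1) = bsig R hπ n + j + 1 from by omega]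
              rcases Nat.lt_or_ge (bsig R hπ n + j + 1) (bsig R hπ (n+1)) with hcb | hcb
              · rcases Nat.lt_or_ge (bsig R hπ n + j + 1) (bsig R hπ' (n+1)) with hcb' | hcb'
                · have h1 : ¬(π (bsig R hπ n + j + 1)).isLeft :=
                    bsig_gap R hπ (by omega) hcb
                  have h2 : ¬(π' (bsig R hπ n + j + 1)).isLeft :=
                    bsig_gap R hπ' (by omega) hcb'
                  cases hq1 : π (bsig R hπ n + j + 1) with
                  | inl z => rw [hq1] at h1; simp at h1
                  | inr p1 =>
                    cases hq2 : π' (bsig R hπ n + j + 1) with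
                    | inl z => rw [hq2] at h2; simp at h2
                    | inr p2 =>
                      have e1 := hπ (bsig R hπ n + j); rw [hp, hq1] at e1
                      have e2 := hπ' (bsig R hπ n + j); rw [hp', hq2] at e2
                      obtain ⟨hw1, he1⟩ := bR2_inr_inr R e1
                      obtain ⟨hw2, he2⟩ := bR2_inr_inr R e2
                      rw [he1, he2]
                · exact (bclash R hq' hq hπ' hπ (hρ (n+1)).symm hp' hp
                    (by omega) (by omega) (by omega)).elim
              · rcases Nat.lt_or_ge (bsig R hπ n + j + 1) (bsig R hπ' (n+1)) with hcb' | hcb'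
                · exact (bclash R hq hq' hπ hπ' (hρ (n+1)) hp hp'
                    (by omega) (by omega) (by omega)).elim
                · have hbeq : bsig R hπ (n+1) = bsig R hπ n + j + 1 := by omega
                  have hbeq' : bsig R hπ' (n+1) = bsig R hπ n + j + 1 := by omega
                  have hL1 : π (bsig R hπ n + j + 1) = Sum.inl (brho R q hπ (n+1)) := by
                    rw [← hbeq]; exact brho_spec R hq hπ (n+1)
                  have hL2 : π' (bsig R hπ n + j + 1) = Sum.inl (brho R q hπ (n+1)) := by
                    rw [← hbeq', hρ (n+1)]; exact brho_spec R hq' hπ' (n+1)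
                  rw [hL1, hL2]
      have hbb : bsig R hπ (n+1) = bsig R hπ' (n+1) := by
        rcases lt_trichotomy (bsig R hπ (n+1)) (bsig R hπ' (n+1)) with h | h | h
        · exfalso
          have hab : bsig R hπ n < bsig R hπ (n+1) := bsig_mono R hπ (Nat.lt_succ_self n)
          have hin := inner (bsig R hπ (n+1) - bsig R hπ n) (by omega) (by omega)
          rw [show bsig R hπ n + (bsig R hπ (n+1) - bsig R hπ n) = bsig R hπ (n+1)
            from by omega] at hin
          have hg : ¬(π' (bsig R hπ (n+1))).isLeft := bsig_gap R hπ' (by omega) h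
          rw [← hin, brho_spec R hq hπ (n+1)] at hg; simp at hg
        · exact h
        · exfalso
          have hab : bsig R hπ' n < bsig R hπ' (n+1) := bsig_mono R hπ' (Nat.lt_succ_self n)
          have hin := inner (bsig R hπ' (n+1) - bsig R hπ n) (by omega) (by omega)
          rw [show bsig R hπ n + (bsig R hπ' (n+1) - bsig R hπ n) = bsig R hπ' (n+1)
            from by omega] at hin
          have hg : ¬(π (bsig R hπ' (n+1))).isLeft := bsig_gap R hπ (by omega) h
          rw [hin, brho_spec R hq' hπ' (n+1)] at hg; simp at hg
      refine ⟨hbb, fun m hm => ?_⟩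
      rcases Nat.lt_or_ge (bsig R hπ n) m with hlt | hge
      · have := inner (m - bsig R hπ n) (by omega) (by omega)
        rw [show bsig R hπ n + (m - bsig R hπ n) = m from by omega] at this
        exact this
      · exact heqm m hge
  funext m
  have hle : m ≤ bsig R hπ m := by
    induction m with
    | zero => exact Nat.zero_le _
    | succ k ihk =>
      have := bsig_mono R hπ (show k < k+1 by omega); omega
  exact (main m).2 m hle


noncomputable def bidx (x y : Q) : ℕ :=
  if h : R x y then Classical.choose (benum_surj R h) else 0

theorem bidx_lt {x y : Q} (h : R x y) : bidx R x y < bdeg R x := by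
  rw [bidx, dif_pos h]; exact (Classical.choose_spec (benum_surj R h)).1

theorem benum_bidx {x y : Q} (h : R x y) : benum R x (bidx R x y) = y := by
  rw [bidx, dif_pos h]; exact (Classical.choose_spec (benum_surj R h)).2

noncomputable def bstep (ρ : ℕ → Q) : (Q ⊕ BQint R) × ℕ → (Q ⊕ BQint R) × ℕ
  | (Sum.inl x, n) =>
      if h : 0 < bdeg R x - 1 then (Sum.inr ⟨x, ⟨0, h⟩⟩, n)
      else (Sum.inl (ρ (n+1)), n+1)
  | (Sum.inr ⟨x, i⟩, n) =>
      if benum R x i.1 = ρ (n+1) then (Sum.inl (ρ (n+1)), n+1)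
      else if h : i.1 + 2 < bdeg R x then (Sum.inr ⟨x, ⟨i.1+1, by omega⟩⟩, n)
      else (Sum.inl (ρ (n+1)), n+1)

noncomputable def bf (ρ : ℕ → Q) : ℕ → (Q ⊕ BQint R) × ℕ
  | 0 => (Sum.inl (ρ 0), 0)
  | m+1 => bstep R ρ (bf ρ m)

theorem bf_inv {ρ : ℕ → Q} (hρ : ∀ k, R (ρ k) (ρ (k+1))) : ∀ m,
    (∀ x n, bf R ρ m = (Sum.inl x, n) → x = ρ n) ∧
    (∀ (p : BQint R) n, bf R ρ m = (Sum.inr p, n) →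
      p.1 = ρ n ∧ p.2.1 ≤ bidx R p.1 (ρ (n+1))) := by
  intro m
  induction m with
  | zero =>
    constructor
    · intro x n h
      simp only [bf, Prod.mk.injEq] at h
      obtain ⟨h1, h2⟩ := h
      subst h2
      exact (Sum.inl.inj h1).symm
    · intro p n h
      simp only [bf, Prod.mk.injEq] at h
      exact absurd h.1 (by simp)
  | succ m ih =>
    obtain ⟨ih1, ih2⟩ := ih
    rcases hfm : bf R ρ m with ⟨s, n⟩
    have hbf : bf R ρ (m+1) = bstep R ρ (s, n) := by rw [bf, hfm]
    cases s with
    | inl x =>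
      have hx : x = ρ n := ih1 x n hfm
      by_cases h : 0 < bdeg R x - 1
      · have hbf2 : bf R ρ (m+1) = (Sum.inr ⟨x, ⟨0, h⟩⟩, n) := by
          rw [hbf]; simp only [bstep]; rw [dif_pos h]
        constructor
        · intro x' n' h'
          rw [hbf2] at h'; simp only [Prod.mk.injEq] at h'
          exact absurd h'.1 (by simp)
        · intro p n' h'
          rw [hbf2] at h'; simp only [Prod.mk.injEq] at h'
          obtain ⟨h1, h2⟩ := h'
          obtain rfl := Sum.inr.inj h1
          subst h2
          exact ⟨hx, Nat.zero_le _⟩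
      · have hbf2 : bf R ρ (m+1) = (Sum.inl (ρ (n+1)), n+1) := by
          rw [hbf]; simp only [bstep]; rw [dif_neg h]
        constructor
        · intro x' n' h'
          rw [hbf2] at h'; simp only [Prod.mk.injEq] at h'
          obtain ⟨h1, h2⟩ := h'
          subst h2
          exact (Sum.inl.inj h1).symm
        · intro p n' h'
          rw [hbf2] at h'; simp only [Prod.mk.injEq] at h'
          exact absurd h'.1 (by simp)
    | inr p =>
      obtain ⟨x, i⟩ := p
      obtain ⟨hx, hib⟩ := ih2 ⟨x, i⟩ n hfm
      have hx' : x = ρ n := hx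
      have hib' : i.1 ≤ bidx R x (ρ (n+1)) := hib
      have hR : R x (ρ (n+1)) := by rw [hx']; exact hρ n
      by_cases h1 : benum R x i.1 = ρ (n+1)
      · have hbf2 : bf R ρ (m+1) = (Sum.inl (ρ (n+1)), n+1) := by
          rw [hbf]; simp only [bstep]; rw [if_pos h1]
        constructor
        · intro x' n' h'
          rw [hbf2] at h'; simp only [Prod.mk.injEq] at h'
          obtain ⟨ha, hb⟩ := h'
          subst hb
          exact (Sum.inl.inj ha).symm
        · intro p n' h'
          rw [hbf2] at h'; simp only [Prod.mk.injEq] at h'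
          exact absurd h'.1 (by simp)
      · have hlt : i.1 < bidx R x (ρ (n+1)) := by
          rcases eq_or_lt_of_le hib' with he | hl
          · exfalso; apply h1
            rw [he, benum_bidx R hR]
          · exact hl
        by_cases h2 : i.1 + 2 < bdeg R x
        · have hbf2 : bf R ρ (m+1) = (Sum.inr ⟨x, ⟨i.1+1, by omega⟩⟩, n) := by
            rw [hbf]; simp only [bstep]; rw [if_neg h1, dif_pos h2]
          constructor
          · intro x' n' h'
            rw [hbf2] at h'; simp only [Prod.mk.injEq] at h'
            exact absurd h'.1 (by simp)
          · intro p n' h'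
            rw [hbf2] at h'; simp only [Prod.mk.injEq] at h'
            obtain ⟨ha, hb⟩ := h'
            obtain rfl := Sum.inr.inj ha
            subst hb
            refine ⟨hx', ?_⟩
            show i.1 + 1 ≤ bidx R x (ρ (n+1))
            omega
        · have hbf2 : bf R ρ (m+1) = (Sum.inl (ρ (n+1)), n+1) := by
            rw [hbf]; simp only [bstep]; rw [if_neg h1, dif_neg h2]
          constructor
          · intro x' n' h'
            rw [hbf2] at h'; simp only [Prod.mk.injEq] at h'
            obtain ⟨ha, hb⟩ := h'
            subst hb
            exact (Sum.inl.inj ha).symm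
          · intro p n' h'
            rw [hbf2] at h'; simp only [Prod.mk.injEq] at h'
            exact absurd h'.1 (by simp)

theorem bf_path {ρ : ℕ → Q} (hρ : ∀ k, R (ρ k) (ρ (k+1))) (m : ℕ) :
    bR2 R (bf R ρ m).1 (bf R ρ (m+1)).1 := by
  obtain ⟨inv1, inv2⟩ := bf_inv R hρ m
  rcases hfm : bf R ρ m with ⟨s, n⟩
  have hbf : bf R ρ (m+1) = bstep R ρ (s, n) := by rw [bf, hfm]
  rw [hbf]
  cases s with
  | inl x =>
    have hx : x = ρ n := inv1 x n hfm
    have hR : R x (ρ (n+1)) := by rw [hx]; exact hρ n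
    by_cases h : 0 < bdeg R x - 1
    · simp only [bstep]; rw [dif_pos h]
      exact Or.inr ⟨h, rfl⟩
    · simp only [bstep]; rw [dif_neg h]
      refine Or.inl ⟨by omega, ?_⟩
      have h1 : bidx R x (ρ (n+1)) < bdeg R x := bidx_lt R hR
      have h2 : bidx R x (ρ (n+1)) = 0 := by omega
      show Sum.inl (ρ (n+1)) = Sum.inl (benum R x 0)
      rw [← benum_bidx R hR, h2]
  | inr p =>
    obtain ⟨x, i⟩ := p
    obtain ⟨hx, hib⟩ := inv2 ⟨x, i⟩ n hfm
    have hx' : x = ρ n := hx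
    have hib' : i.1 ≤ bidx R x (ρ (n+1)) := hib
    have hR : R x (ρ (n+1)) := by rw [hx']; exact hρ n
    simp only [bstep]
    by_cases h1 : benum R x i.1 = ρ (n+1)
    · rw [if_pos h1]
      exact Or.inl (by show Sum.inl (ρ (n+1)) = Sum.inl (benum R x i.1); rw [h1])
    · rw [if_neg h1]
      have hlt : i.1 < bidx R x (ρ (n+1)) := by
        rcases eq_or_lt_of_le hib' with he | hl
        · exfalso; apply h1
          rw [he, benum_bidx R hR]
        · exact hl
      by_cases h2 : i.1 + 2 < bdeg R x
      · rw [dif_pos h2]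
        refine Or.inr ?_
        rw [dif_pos h2]
      · rw [dif_neg h2]
        refine Or.inr ?_
        rw [dif_neg h2]
        have hbl : bidx R x (ρ (n+1)) < bdeg R x := bidx_lt R hR
        have h3 : bidx R x (ρ (n+1)) = i.1 + 1 := by have := i.2; omega
        show Sum.inl (ρ (n+1)) = Sum.inl (benum R x (i.1+1))
        rw [← benum_bidx R hR, h3]

theorem bf_counter (ρ : ℕ → Q) (m : ℕ) :
    ((bf R ρ (m+1)).2 = (bf R ρ m).2 ∧ ¬(bf R ρ (m+1)).1.isLeft) ∨
    ((bf R ρ (m+1)).2 = (bf R ρ m).2 + 1 ∧ (bf R ρ (m+1)).1.isLeft) := by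
  rcases hfm : bf R ρ m with ⟨s, n⟩
  have hbf : bf R ρ (m+1) = bstep R ρ (s, n) := by rw [bf, hfm]
  rw [hbf]
  cases s with
  | inl x =>
    by_cases h : 0 < bdeg R x - 1
    · left; simp only [bstep]; rw [dif_pos h]; exact ⟨rfl, by simp; rfl⟩
    · right; simp only [bstep]; rw [dif_neg h]; exact ⟨rfl, by simp⟩
  | inr p =>
    obtain ⟨x, i⟩ := p
    by_cases h1 : benum R x i.1 = ρ (n+1)
    · right; simp only [bstep]; rw [if_pos h1]; exact ⟨rfl, by simp⟩
    · by_cases h2 : i.1 + 2 < bdeg R x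
      · left; simp only [bstep]; rw [if_neg h1, dif_pos h2]; exact ⟨rfl, by simp; rfl⟩
      · right; simp only [bstep]; rw [if_neg h1, dif_neg h2]; exact ⟨rfl, by simp⟩

theorem bf_c_mono (ρ : ℕ → Q) : Monotone (fun m => (bf R ρ m).2) :=
  monotone_nat_of_le_succ (fun m => by
    rcases bf_counter R ρ m with ⟨h, -⟩ | ⟨h, -⟩ <;> omega)

theorem bf_c_surj {ρ : ℕ → Q} (hρ : ∀ k, R (ρ k) (ρ (k+1))) (n : ℕ) :
    ∃ m, (bf R ρ m).2 = n := by
  induction n with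
  | zero => exact ⟨0, rfl⟩
  | succ n ih =>
    obtain ⟨m, hm⟩ := ih
    have hπ : ∀ k, bR2 R ((bf R ρ k).1) ((bf R ρ (k+1)).1) := bf_path R hρ
    have hnl := bnextLeft R hπ m
    have hconst : ∀ s, s ≤ Nat.find hnl → (bf R ρ (m+s)).2 = n := by
      intro s
      induction s with
      | zero => intro _; exact hm
      | succ s ihs =>
        intro hs
        have h1 : (bf R ρ (m+s)).2 = n := ihs (by omega)
        have h2 : ¬((bf R ρ (m+1+s)).1).isLeft := Nat.find_min hnl (m := s) (by omega)
        rcases bf_counter R ρ (m+s) with ⟨h3, -⟩ | ⟨-, h3⟩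
        · rw [show m+(s+1) = m+s+1 from by omega, h3, h1]
        · exfalso; apply h2
          rw [show m+1+s = m+s+1 from by omega]
          exact h3
    have hL : ((bf R ρ (m+1+Nat.find hnl)).1).isLeft := Nat.find_spec hnl
    have hc : (bf R ρ (m+Nat.find hnl)).2 = n := hconst _ le_rfl
    refine ⟨m+1+Nat.find hnl, ?_⟩
    rcases bf_counter R ρ (m+Nat.find hnl) with ⟨-, h3⟩ | ⟨h3, -⟩
    · exfalso; apply h3
      rw [show m+Nat.find hnl+1 = m+1+Nat.find hnl from by omega]
      exact hL
    · rw [show m+1+Nat.find hnl = m+Nat.find hnl+1 from by omega, h3, hc]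

theorem bf_erases {ρ : ℕ → Q} (hρ : ∀ k, R (ρ k) (ρ (k+1))) :
    Erases (fun m => (bf R ρ m).1) ρ := by
  have hfind := fun n => bf_c_surj R hρ n
  have hspec : ∀ n, (bf R ρ (Nat.find (hfind n))).2 = n := fun n => Nat.find_spec (hfind n)
  have hLeft : ∀ n, ((bf R ρ (Nat.find (hfind n))).1).isLeft := by
    intro n
    cases hae : Nat.find (hfind n) with
    | zero => rfl
    | succ k =>
      have h1 : (bf R ρ (k+1)).2 = n := by rw [← hae]; exact hspec n
      have hk : ¬((bf R ρ k).2 = n) :=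
        Nat.find_min (hfind n) (m := k) (by rw [hae]; omega)
      rcases bf_counter R ρ k with ⟨h3, -⟩ | ⟨-, h4⟩
      · exact absurd (h3.symm.trans h1) hk
      · exact h4
  refine ⟨fun n => Nat.find (hfind n), ?_, ?_, ?_⟩
  · apply strictMono_nat_of_lt_succ
    intro n
    have h1 := hspec n
    have h2 := hspec (n+1)
    by_contra hcon
    push_neg at hcon
    have hm2 : (bf R ρ (Nat.find (hfind (n+1)))).2 ≤ (bf R ρ (Nat.find (hfind n))).2 :=
      bf_c_mono R ρ hcon
    omega
  · intro n
    have hL := hLeft n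
    rcases Sum.isLeft_iff.mp hL with ⟨x, hx⟩
    have hbx : bf R ρ (Nat.find (hfind n)) =
        (Sum.inl x, (bf R ρ (Nat.find (hfind n))).2) := by rw [← hx]
    have h2 := (bf_inv R hρ (Nat.find (hfind n))).1 x _ hbx
    show (bf R ρ (Nat.find (hfind n))).1 = Sum.inl (ρ n)
    rw [hx, h2, hspec n]
  · intro m x hx
    simp only at hx
    refine ⟨(bf R ρ m).2, ?_⟩
    have hle : Nat.find (hfind ((bf R ρ m).2)) ≤ m := Nat.find_min' _ rfl
    rcases eq_or_lt_of_le hle with he | hl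
    · exact he
    · exfalso
      cases m with
      | zero => omega
      | succ k =>
        have h4 : (bf R ρ (k+1)).2 = (bf R ρ k).2 + 1 := by
          rcases bf_counter R ρ k with ⟨-, h5⟩ | ⟨h5, -⟩
          · exact absurd (by rw [hx]; rfl) h5
          · exact h5
        have h6 : (bf R ρ (Nat.find (hfind ((bf R ρ (k+1)).2)))).2 = (bf R ρ (k+1)).2 :=
          hspec _
        have h7 : (bf R ρ (Nat.find (hfind ((bf R ρ (k+1)).2)))).2 ≤ (bf R ρ k).2 :=
          bf_c_mono R ρ (show Nat.find (hfind ((bf R ρ (k+1)).2)) ≤ k from by omega)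
        omega

theorem brho_zero {π : ℕ → Q ⊕ BQint R} {q : Q} (hq : π 0 = Sum.inl q)
    (hπ : ∀ k, bR2 R (π k) (π (k+1))) : brho R q hπ 0 = q := by
  have h := brho_spec R hq hπ 0
  have h0 : bsig R hπ 0 = 0 := rfl
  rw [h0, hq] at h
  exact (Sum.inl.inj h).symm

theorem brho_erases {π : ℕ → Q ⊕ BQint R} {q : Q} (hq : π 0 = Sum.inl q)
    (hπ : ∀ k, bR2 R (π k) (π (k+1))) : Erases π (brho R q hπ) := by
  refine ⟨bsig R hπ, bsig_mono R hπ, brho_spec R hq hπ, ?_⟩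
  intro m x hx
  exact bsig_surj R hπ (by rw [hx]; rfl)


theorem bR2_total (htotal : ∀ u, ∃ u', R u u') (n : Q ⊕ BQint R) :
    ∃ m, bR2 R n m := by
  match n with
  | Sum.inl x =>
    by_cases h : 0 < bdeg R x - 1
    · exact ⟨Sum.inr ⟨x, ⟨0, h⟩⟩, Or.inr ⟨h, rfl⟩⟩
    · exact ⟨Sum.inl (benum R x 0), Or.inl ⟨by omega, rfl⟩⟩
  | Sum.inr ⟨x, i⟩ => exact ⟨Sum.inl (benum R x i.1), Or.inl rfl⟩

theorem ncard_le_two {α : Type*} {s : Set α} {a b : α} (h : s ⊆ {a, b}) :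
    s.ncard ≤ 2 := by
  calc s.ncard ≤ ({a, b} : Set α).ncard := Set.ncard_le_ncard h (Set.toFinite _)
    _ ≤ ({b} : Set α).ncard + 1 := Set.ncard_insert_le _ _
    _ ≤ 2 := by rw [Set.ncard_singleton]

theorem bR2_deg (n : Q ⊕ BQint R) : Set.ncard {m | bR2 R n m} ≤ 2 := by
  match n with
  | Sum.inl x =>
    by_cases h : 0 < bdeg R x - 1
    · refine ncard_le_two (a := Sum.inl (benum R x 0)) (b := Sum.inr ⟨x, ⟨0, h⟩⟩) ?_
      rintro m (⟨-, rfl⟩ | ⟨-, rfl⟩) <;> simp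
    · refine ncard_le_two (a := Sum.inl (benum R x 0)) (b := Sum.inl (benum R x 0)) ?_
      rintro m (⟨-, rfl⟩ | ⟨h', rfl⟩); · simp
      · exact absurd h' h
  | Sum.inr ⟨x, i⟩ =>
    by_cases h : i.1 + 2 < bdeg R x
    · refine ncard_le_two (a := Sum.inl (benum R x i.1))
        (b := Sum.inr ⟨x, ⟨i.1 + 1, by omega⟩⟩) ?_
      rintro m (rfl | hm); · simp
      · rw [dif_pos h] at hm; subst hm; simp
    · refine ncard_le_two (a := Sum.inl (benum R x i.1))
        (b := Sum.inl (benum R x (i.1 + 1))) ?_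
      rintro m (rfl | hm); · simp
      · rw [dif_neg h] at hm; subst hm; simp

theorem bQint_card : Nat.card (BQint R) = ∑ x : Q, (Set.ncard {y | R x y} - 1) := by
  simp only [Nat.card_eq_fintype_card]
  have : Fintype.card (BQint R) = Fintype.card (Σ x : Q, Fin (bdeg R x - 1)) :=
    Fintype.card_congr (Equiv.refl _)
  rw [this, Fintype.card_sigma]
  simp only [Fintype.card_fin]; rfl

theorem bR2_single {x y : Q} (h : ({z | R x z} : Set Q) = {y}) :
    bR2 R (Sum.inl x) (Sum.inl y) ∧ ∀ m, bR2 R (Sum.inl x) m → m = Sum.inl y := by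
  have hdeg : bdeg R x = 1 := by rw [bdeg, h, Set.ncard_singleton]
  have h0 : benum R x 0 = y := by
    have h1 := benum_mem R (x := x) (n := 0) (by omega)
    have h2 : benum R x 0 ∈ ({z | R x z} : Set Q) := h1
    rw [h] at h2; exact h2
  constructor
  · exact Or.inl ⟨by omega, by rw [h0]⟩
  · rintro m (⟨-, rfl⟩ | ⟨h', -⟩)
    · rw [h0]
    · omega

theorem erases_unique {Q' Qint : Type} {π : ℕ → Q' ⊕ Qint} {ρ₁ ρ₂ : ℕ → Q'}
    (h1 : Erases π ρ₁) (h2 : Erases π ρ₂) : ρ₁ = ρ₂ := by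
  obtain ⟨σ₁, hm1, hv1, hs1⟩ := h1
  obtain ⟨σ₂, hm2, hv2, hs2⟩ := h2
  have hr : Set.range σ₁ = Set.range σ₂ := by
    ext m; constructor
    · rintro ⟨n, rfl⟩
      obtain ⟨k, hk⟩ := hs2 (σ₁ n) _ (hv1 n); exact ⟨k, hk⟩
    · rintro ⟨n, rfl⟩
      obtain ⟨k, hk⟩ := hs1 (σ₂ n) _ (hv2 n); exact ⟨k, hk⟩
  have hσ : σ₁ = σ₂ := (hm1.range_inj hm2).mp hr
  funext n
  have e1 := hv1 n
  rw [hσ, hv2 n] at e1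
  exact (Sum.inl.inj e1).symm

noncomputable def bF (htotal : ∀ u, ∃ u', R u u') (q : Q)
    (p : {π : ℕ → Q ⊕ BQint R // π 0 = Sum.inl q ∧ ∀ i, bR2 R (π i) (π (i + 1))}) :
    {ρ : ℕ → Q // ρ 0 = q ∧ ∀ i, R (ρ i) (ρ (i + 1))} :=
  ⟨brho R q p.2.2, brho_zero R p.2.1 p.2.2, fun i => brho_path R htotal p.2.1 p.2.2 i⟩

theorem bF_bijective (htotal : ∀ u, ∃ u', R u u') (q : Q) :
    Function.Bijective (bF R htotal q) := by
  constructor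
  · rintro p1 p2 hE
    have hρ : ∀ k, brho R q p1.2.2 k = brho R q p2.2.2 k := by
      intro k
      have := congrArg Subtype.val hE
      exact congrFun this k
    exact Subtype.ext (binj R p1.2.1 p2.2.1 p1.2.2 p2.2.2 hρ)
  · rintro ⟨ρ, h0, hρ⟩
    have hqπ : (fun m => (bf R ρ m).1) 0 = Sum.inl q := by
      show Sum.inl (ρ 0) = Sum.inl q
      rw [h0]
    have hππ : ∀ i, bR2 R ((fun m => (bf R ρ m).1) i) ((fun m => (bf R ρ m).1) (i+1)) :=
      bf_path R hρ
    refine ⟨⟨fun m => (bf R ρ m).1, hqπ, hππ⟩, ?_⟩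
    apply Subtype.ext
    show brho R q hππ = ρ
    exact erases_unique (brho_erases R hqπ hππ) (bf_erases R hρ)

end BinEnc


/-- The binary-encoding construction `S₂` of a finite Kripke structure `S`:
there is a set `Qint` of fresh internal (`p_int`-labelled) nodes and a transition
relation `R₂` on `Q ⊕ Qint` such that every node has at most two successors,
`|Q_int| = Σ_x (deg(x) − 1)`, states with a single successor keep their transition,
and for every state `q`, erasing internal nodes is a bijection between the infinite
paths of `S₂` from `q` and the infinite paths of `S` from `q`. -/
theorem binary_encoding {Q : Type} [Fintype Q] [DecidableEq Q]
    (R : Q → Q → Prop) (htotal : ∀ u, ∃ u', R u u') :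
    ∃ (Qint : Type) (_ : Fintype Qint) (R₂ : Q ⊕ Qint → Q ⊕ Qint → Prop),
      (∀ n, ∃ m, R₂ n m) ∧
      (∀ n : Q ⊕ Qint, Set.ncard {m | R₂ n m} ≤ 2) ∧
      (Nat.card Qint = ∑ x : Q, (Set.ncard {y | R x y} - 1)) ∧
      (∀ x y : Q, ({z | R x z} : Set Q) = {y} →
        (R₂ (Sum.inl x) (Sum.inl y) ∧ ∀ m, R₂ (Sum.inl x) m → m = Sum.inl y)) ∧
      ∀ q : Q,
        ∃ e : {π : ℕ → Q ⊕ Qint // π 0 = Sum.inl q ∧ ∀ i, R₂ (π i) (π (i + 1))} ≃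
              {ρ : ℕ → Q // ρ 0 = q ∧ ∀ i, R (ρ i) (ρ (i + 1))},
          ∀ π, Erases π.1 (e π).1 := by
  refine ⟨BQint R, inferInstance, bR2 R, bR2_total R htotal, bR2_deg R,
    bQint_card R, fun x y h => bR2_single R h, fun q => ?_⟩
  refine ⟨Equiv.ofBijective (bF R htotal q) (bF_bijective R htotal q), ?_⟩
  intro p
  exact brho_erases R p.2.1 p.2.2
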